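/- Let P(u,v) = (k₁·u^{β₁+β₂} + 2k₂·u^{β₁}·v^{β₂} + k₃·v^{β₁+β₂})^{δ/(β₁+β₂)} be a 2-input Kadiyala production function with parameters satisfying (★★). Then the Hessian determinant P_uu·P_vv − P_uv² vanishes identically on (0,∞)² if and only if at least one of the following holds: (i) δ = 1; (ii) k₂ = 0 and β₁+β₂ = 1; (iii) β₁ = β₂ = 1 and k₂² − k₁k₃ = 0. -/

import Mathlib

open Real

/-- Partial derivative in the first variable. -/
noncomputable def pdu (f : ℝ → ℝ → ℝ) : ℝ → ℝ → ℝ := fun u v => deriv (fun x => f x v) u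

/-- Partial derivative in the second variable. -/
noncomputable def pdv (f : ℝ → ℝ → ℝ) : ℝ → ℝ → ℝ := fun u v => deriv (fun y => f u y) v

/-- Hessian determinant `f_uu · f_vv − f_uv²` of `f` at `(u, v)`. -/
noncomputable def hessDet (f : ℝ → ℝ → ℝ) (u v : ℝ) : ℝ :=
  pdu (pdu f) u v * pdv (pdv f) u v - pdv (pdu f) u v ^ 2

/-- Gaussian curvature of the graph surface `{(u, v, f u v)}` at `(u, v)`:
`K = (f_uu · f_vv − f_uv²) / (1 + f_u² + f_v²)²`. -/
noncomputable def gaussK (f : ℝ → ℝ → ℝ) (u v : ℝ) : ℝ :=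
  hessDet f u v / (1 + pdu f u v ^ 2 + pdv f u v ^ 2) ^ 2

/-- The 2-input Kadiyala production function
`P(u,v) = (k₁·u^(β₁+β₂) + 2k₂·u^β₁·v^β₂ + k₃·v^(β₁+β₂))^(δ/(β₁+β₂))`. -/
noncomputable def PKad (k₁ k₂ k₃ β₁ β₂ δ : ℝ) : ℝ → ℝ → ℝ := fun u v =>
  (k₁ * u ^ (β₁ + β₂) + 2 * k₂ * u ^ β₁ * v ^ β₂ + k₃ * v ^ (β₁ + β₂)) ^ (δ / (β₁ + β₂))

noncomputable def Qk (k₁ k₂ k₃ β₁ β₂ u v : ℝ) : ℝ :=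
  k₁ * u ^ (β₁ + β₂) + 2 * k₂ * u ^ β₁ * v ^ β₂ + k₃ * v ^ (β₁ + β₂)
noncomputable def Qu (k₁ k₂ _k₃ β₁ β₂ u v : ℝ) : ℝ :=
  k₁ * ((β₁ + β₂) * u ^ (β₁ + β₂ - 1)) + 2 * k₂ * (β₁ * u ^ (β₁ - 1)) * v ^ β₂
noncomputable def Qv (_k₁ k₂ k₃ β₁ β₂ u v : ℝ) : ℝ :=
  2 * k₂ * u ^ β₁ * (β₂ * v ^ (β₂ - 1)) + k₃ * ((β₁ + β₂) * v ^ (β₁ + β₂ - 1))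
noncomputable def Quu (k₁ k₂ _k₃ β₁ β₂ u v : ℝ) : ℝ :=
  k₁ * ((β₁ + β₂) * ((β₁ + β₂ - 1) * u ^ (β₁ + β₂ - 1 - 1)))
    + 2 * k₂ * (β₁ * ((β₁ - 1) * u ^ (β₁ - 1 - 1))) * v ^ β₂
noncomputable def Qvv (_k₁ k₂ k₃ β₁ β₂ u v : ℝ) : ℝ :=
  2 * k₂ * u ^ β₁ * (β₂ * ((β₂ - 1) * v ^ (β₂ - 1 - 1)))
    + k₃ * ((β₁ + β₂) * ((β₁ + β₂ - 1) * v ^ (β₁ + β₂ - 1 - 1)))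
noncomputable def Quv (_k₁ k₂ _k₃ β₁ β₂ u v : ℝ) : ℝ :=
  2 * k₂ * (β₁ * u ^ (β₁ - 1)) * (β₂ * v ^ (β₂ - 1))
noncomputable def Stilde (k₁ k₂ k₃ β₁ β₂ u v : ℝ) : ℝ :=
  (β₁ + β₂ - 1) * k₁ * k₃ * (β₁ + β₂) ^ 2 * (u ^ (β₁ + β₂) * v ^ (β₁ + β₂))
    - 4 * k₂ ^ 2 * β₁ * β₂ * (u ^ β₁ * v ^ β₂) ^ 2
    + 2 * k₁ * k₂ * (β₁ + β₂) * β₂ * (β₂ - 1) * (u ^ (β₁ + β₂) * (u ^ β₁ * v ^ β₂))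
    + 2 * k₂ * k₃ * (β₁ + β₂) * β₁ * (β₁ - 1) * ((u ^ β₁ * v ^ β₂) * v ^ (β₁ + β₂))

lemma hasDerivAt_Qk_u (k₁ k₂ k₃ β₁ β₂ v : ℝ) {u : ℝ} (hu : 0 < u) :
    HasDerivAt (fun x => Qk k₁ k₂ k₃ β₁ β₂ x v) (Qu k₁ k₂ k₃ β₁ β₂ u v) u := by
  unfold Qk Qu
  have h1 := (Real.hasDerivAt_rpow_const (x := u) (p := β₁ + β₂) (Or.inl hu.ne')).const_mul k₁
  have h2 := ((Real.hasDerivAt_rpow_const (x := u) (p := β₁) (Or.inl hu.ne')).const_mul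
      (2 * k₂)).mul_const (v ^ β₂)
  have h3 : HasDerivAt (fun _ : ℝ => k₃ * v ^ (β₁ + β₂)) 0 u := hasDerivAt_const _ _
  refine ((h1.add h2).add h3).congr_deriv ?_
  ring

lemma hasDerivAt_Qk_v (k₁ k₂ k₃ β₁ β₂ u : ℝ) {v : ℝ} (hv : 0 < v) :
    HasDerivAt (fun y => Qk k₁ k₂ k₃ β₁ β₂ u y) (Qv k₁ k₂ k₃ β₁ β₂ u v) v := by
  unfold Qk Qv
  have h1 : HasDerivAt (fun _ : ℝ => k₁ * u ^ (β₁ + β₂)) 0 v := hasDerivAt_const _ _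
  have h2 := (Real.hasDerivAt_rpow_const (x := v) (p := β₂) (Or.inl hv.ne')).const_mul
      (2 * k₂ * u ^ β₁)
  have h3 := (Real.hasDerivAt_rpow_const (x := v) (p := β₁ + β₂) (Or.inl hv.ne')).const_mul k₃
  refine ((h1.add h2).add h3).congr_deriv ?_
  ring

lemma hasDerivAt_Qu_u (k₁ k₂ k₃ β₁ β₂ v : ℝ) {u : ℝ} (hu : 0 < u) :
    HasDerivAt (fun x => Qu k₁ k₂ k₃ β₁ β₂ x v) (Quu k₁ k₂ k₃ β₁ β₂ u v) u := by
  unfold Qu Quu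
  have h1 := (Real.hasDerivAt_rpow_const (x := u) (p := β₁ + β₂ - 1) (Or.inl hu.ne')).const_mul
      (k₁ * (β₁ + β₂))
  have h2 := ((Real.hasDerivAt_rpow_const (x := u) (p := β₁ - 1) (Or.inl hu.ne')).const_mul
      (2 * k₂ * β₁)).mul_const (v ^ β₂)
  have hfun : (fun x => k₁ * ((β₁ + β₂) * x ^ (β₁ + β₂ - 1)) + 2 * k₂ * (β₁ * x ^ (β₁ - 1)) * v ^ β₂)
      = fun x => k₁ * (β₁ + β₂) * x ^ (β₁ + β₂ - 1) + 2 * k₂ * β₁ * x ^ (β₁ - 1) * v ^ β₂ := by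
    funext x; ring
  rw [hfun]
  refine (h1.add h2).congr_deriv ?_
  ring

lemma hasDerivAt_Qu_v (k₁ k₂ k₃ β₁ β₂ u : ℝ) {v : ℝ} (hv : 0 < v) :
    HasDerivAt (fun y => Qu k₁ k₂ k₃ β₁ β₂ u y) (Quv k₁ k₂ k₃ β₁ β₂ u v) v := by
  unfold Qu Quv
  have h1 : HasDerivAt (fun _ : ℝ => k₁ * ((β₁ + β₂) * u ^ (β₁ + β₂ - 1))) 0 v :=
    hasDerivAt_const _ _
  have h2 := (Real.hasDerivAt_rpow_const (x := v) (p := β₂) (Or.inl hv.ne')).const_mul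
      (2 * k₂ * (β₁ * u ^ (β₁ - 1)))
  refine (h1.add h2).congr_deriv ?_
  ring

lemma hasDerivAt_Qv_v (k₁ k₂ k₃ β₁ β₂ u : ℝ) {v : ℝ} (hv : 0 < v) :
    HasDerivAt (fun y => Qv k₁ k₂ k₃ β₁ β₂ u y) (Qvv k₁ k₂ k₃ β₁ β₂ u v) v := by
  unfold Qv Qvv
  have h1 := (Real.hasDerivAt_rpow_const (x := v) (p := β₂ - 1) (Or.inl hv.ne')).const_mul
      (2 * k₂ * u ^ β₁ * β₂)
  have h2 := (Real.hasDerivAt_rpow_const (x := v) (p := β₁ + β₂ - 1) (Or.inl hv.ne')).const_mul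
      (k₃ * (β₁ + β₂))
  have hfun : (fun y => 2 * k₂ * u ^ β₁ * (β₂ * y ^ (β₂ - 1)) + k₃ * ((β₁ + β₂) * y ^ (β₁ + β₂ - 1)))
      = fun y => 2 * k₂ * u ^ β₁ * β₂ * y ^ (β₂ - 1) + k₃ * (β₁ + β₂) * y ^ (β₁ + β₂ - 1) := by
    funext y; ring
  rw [hfun]
  refine (h1.add h2).congr_deriv ?_
  ring

lemma pdu_PKad (k₁ k₂ k₃ β₁ β₂ δ : ℝ) {u v : ℝ} (hu : 0 < u)
    (hQ : Qk k₁ k₂ k₃ β₁ β₂ u v ≠ 0) :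
    pdu (PKad k₁ k₂ k₃ β₁ β₂ δ) u v =
      (δ / (β₁ + β₂)) * (Qk k₁ k₂ k₃ β₁ β₂ u v) ^ (δ / (β₁ + β₂) - 1)
        * Qu k₁ k₂ k₃ β₁ β₂ u v := by
  have h := (hasDerivAt_Qk_u k₁ k₂ k₃ β₁ β₂ v hu).rpow_const (p := δ / (β₁ + β₂)) (Or.inl hQ)
  have e : pdu (PKad k₁ k₂ k₃ β₁ β₂ δ) u v
      = deriv (fun x => (Qk k₁ k₂ k₃ β₁ β₂ x v) ^ (δ / (β₁ + β₂))) u := rfl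
  rw [e, h.deriv]; ring

lemma pdv_PKad (k₁ k₂ k₃ β₁ β₂ δ : ℝ) {u v : ℝ} (hv : 0 < v)
    (hQ : Qk k₁ k₂ k₃ β₁ β₂ u v ≠ 0) :
    pdv (PKad k₁ k₂ k₃ β₁ β₂ δ) u v =
      (δ / (β₁ + β₂)) * (Qk k₁ k₂ k₃ β₁ β₂ u v) ^ (δ / (β₁ + β₂) - 1)
        * Qv k₁ k₂ k₃ β₁ β₂ u v := by
  have h := (hasDerivAt_Qk_v k₁ k₂ k₃ β₁ β₂ u hv).rpow_const (p := δ / (β₁ + β₂)) (Or.inl hQ)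
  have e : pdv (PKad k₁ k₂ k₃ β₁ β₂ δ) u v
      = deriv (fun y => (Qk k₁ k₂ k₃ β₁ β₂ u y) ^ (δ / (β₁ + β₂))) v := rfl
  rw [e, h.deriv]; ring

section second
variable (k₁ k₂ k₃ β₁ β₂ δ : ℝ)

/-- second partial u,u -/
lemma pduu_PKad (hQpos : ∀ x y : ℝ, 0 < x → 0 < y → 0 < Qk k₁ k₂ k₃ β₁ β₂ x y)
    {u v : ℝ} (hu : 0 < u) (hv : 0 < v) :
    pdu (pdu (PKad k₁ k₂ k₃ β₁ β₂ δ)) u v =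
      (δ / (β₁ + β₂)) * (((δ / (β₁ + β₂) - 1) * (Qk k₁ k₂ k₃ β₁ β₂ u v) ^ (δ / (β₁ + β₂) - 1 - 1)
          * Qu k₁ k₂ k₃ β₁ β₂ u v * Qu k₁ k₂ k₃ β₁ β₂ u v)
        + (Qk k₁ k₂ k₃ β₁ β₂ u v) ^ (δ / (β₁ + β₂) - 1) * Quu k₁ k₂ k₃ β₁ β₂ u v) := by
  have hev : (fun x => pdu (PKad k₁ k₂ k₃ β₁ β₂ δ) x v) =ᶠ[nhds u]
      (fun x => (δ / (β₁ + β₂)) * ((Qk k₁ k₂ k₃ β₁ β₂ x v) ^ (δ / (β₁ + β₂) - 1)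
        * Qu k₁ k₂ k₃ β₁ β₂ x v)) := by
    filter_upwards [Ioi_mem_nhds hu] with x hx
    rw [pdu_PKad k₁ k₂ k₃ β₁ β₂ δ hx (hQpos x v hx hv).ne']; ring
  have hQd := hasDerivAt_Qk_u k₁ k₂ k₃ β₁ β₂ v hu
  have hP := (hQd.rpow_const (p := δ / (β₁ + β₂) - 1)
      (Or.inl (hQpos u v hu hv).ne')).mul (hasDerivAt_Qu_u k₁ k₂ k₃ β₁ β₂ v hu)
  have hP2 := hP.const_mul (δ / (β₁ + β₂))
  have e : pdu (pdu (PKad k₁ k₂ k₃ β₁ β₂ δ)) u v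
      = deriv (fun x => pdu (PKad k₁ k₂ k₃ β₁ β₂ δ) x v) u := rfl
  rw [e, hev.deriv_eq]; exact hP2.deriv.trans (by ring)

/-- second partial v,v -/
lemma pdvv_PKad (hQpos : ∀ x y : ℝ, 0 < x → 0 < y → 0 < Qk k₁ k₂ k₃ β₁ β₂ x y)
    {u v : ℝ} (hu : 0 < u) (hv : 0 < v) :
    pdv (pdv (PKad k₁ k₂ k₃ β₁ β₂ δ)) u v =
      (δ / (β₁ + β₂)) * (((δ / (β₁ + β₂) - 1) * (Qk k₁ k₂ k₃ β₁ β₂ u v) ^ (δ / (β₁ + β₂) - 1 - 1)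
          * Qv k₁ k₂ k₃ β₁ β₂ u v * Qv k₁ k₂ k₃ β₁ β₂ u v)
        + (Qk k₁ k₂ k₃ β₁ β₂ u v) ^ (δ / (β₁ + β₂) - 1) * Qvv k₁ k₂ k₃ β₁ β₂ u v) := by
  have hev : (fun y => pdv (PKad k₁ k₂ k₃ β₁ β₂ δ) u y) =ᶠ[nhds v]
      (fun y => (δ / (β₁ + β₂)) * ((Qk k₁ k₂ k₃ β₁ β₂ u y) ^ (δ / (β₁ + β₂) - 1)
        * Qv k₁ k₂ k₃ β₁ β₂ u y)) := by
    filter_upwards [Ioi_mem_nhds hv] with y hy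
    rw [pdv_PKad k₁ k₂ k₃ β₁ β₂ δ hy (hQpos u y hu hy).ne']; ring
  have hQd := hasDerivAt_Qk_v k₁ k₂ k₃ β₁ β₂ u hv
  have hP := (hQd.rpow_const (p := δ / (β₁ + β₂) - 1)
      (Or.inl (hQpos u v hu hv).ne')).mul (hasDerivAt_Qv_v k₁ k₂ k₃ β₁ β₂ u hv)
  have hP2 := hP.const_mul (δ / (β₁ + β₂))
  have e : pdv (pdv (PKad k₁ k₂ k₃ β₁ β₂ δ)) u v
      = deriv (fun y => pdv (PKad k₁ k₂ k₃ β₁ β₂ δ) u y) v := rfl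
  rw [e, hev.deriv_eq]; exact hP2.deriv.trans (by ring)

/-- mixed partial -/
lemma pduv_PKad (hQpos : ∀ x y : ℝ, 0 < x → 0 < y → 0 < Qk k₁ k₂ k₃ β₁ β₂ x y)
    {u v : ℝ} (hu : 0 < u) (hv : 0 < v) :
    pdv (pdu (PKad k₁ k₂ k₃ β₁ β₂ δ)) u v =
      (δ / (β₁ + β₂)) * (((δ / (β₁ + β₂) - 1) * (Qk k₁ k₂ k₃ β₁ β₂ u v) ^ (δ / (β₁ + β₂) - 1 - 1)
          * Qv k₁ k₂ k₃ β₁ β₂ u v * Qu k₁ k₂ k₃ β₁ β₂ u v)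
        + (Qk k₁ k₂ k₃ β₁ β₂ u v) ^ (δ / (β₁ + β₂) - 1) * Quv k₁ k₂ k₃ β₁ β₂ u v) := by
  have hev : (fun y => pdu (PKad k₁ k₂ k₃ β₁ β₂ δ) u y) =ᶠ[nhds v]
      (fun y => (δ / (β₁ + β₂)) * ((Qk k₁ k₂ k₃ β₁ β₂ u y) ^ (δ / (β₁ + β₂) - 1)
        * Qu k₁ k₂ k₃ β₁ β₂ u y)) := by
    filter_upwards [Ioi_mem_nhds hv] with y hy
    rw [pdu_PKad k₁ k₂ k₃ β₁ β₂ δ hu (hQpos u y hu hy).ne']; ring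
  have hQd := hasDerivAt_Qk_v k₁ k₂ k₃ β₁ β₂ u hv
  have hP := (hQd.rpow_const (p := δ / (β₁ + β₂) - 1)
      (Or.inl (hQpos u v hu hv).ne')).mul (hasDerivAt_Qu_v k₁ k₂ k₃ β₁ β₂ u hv)
  have hP2 := hP.const_mul (δ / (β₁ + β₂))
  have e : pdv (pdu (PKad k₁ k₂ k₃ β₁ β₂ δ)) u v
      = deriv (fun y => pdu (PKad k₁ k₂ k₃ β₁ β₂ δ) u y) v := rfl
  rw [e, hev.deriv_eq]; exact hP2.deriv.trans (by ring)

end second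

lemma hess_formula (k₁ k₂ k₃ β₁ β₂ δ : ℝ) (ha : β₁ + β₂ ≠ 0)
    (hQpos : ∀ x y : ℝ, 0 < x → 0 < y → 0 < Qk k₁ k₂ k₃ β₁ β₂ x y)
    {u v : ℝ} (hu : 0 < u) (hv : 0 < v) :
    hessDet (PKad k₁ k₂ k₃ β₁ β₂ δ) u v * (u ^ 2 * v ^ 2) =
      (δ / (β₁ + β₂)) ^ 2 * (δ - 1)
        * (Qk k₁ k₂ k₃ β₁ β₂ u v) ^ (2 * (δ / (β₁ + β₂)) - 2)
        * Stilde k₁ k₂ k₃ β₁ β₂ u v := by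
  have hQ := hQpos u v hu hv
  have hq1 : (Qk k₁ k₂ k₃ β₁ β₂ u v) ^ (δ / (β₁ + β₂) - 1)
      = (Qk k₁ k₂ k₃ β₁ β₂ u v) ^ (δ / (β₁ + β₂) - 1 - 1) * Qk k₁ k₂ k₃ β₁ β₂ u v := by
    rw [Real.rpow_sub_one hQ.ne' (δ / (β₁ + β₂) - 1)]
    field_simp
  have hq2 : (Qk k₁ k₂ k₃ β₁ β₂ u v) ^ (2 * (δ / (β₁ + β₂)) - 2)
      = (Qk k₁ k₂ k₃ β₁ β₂ u v) ^ (δ / (β₁ + β₂) - 1 - 1)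
        * (Qk k₁ k₂ k₃ β₁ β₂ u v) ^ (δ / (β₁ + β₂) - 1 - 1)
        * (Qk k₁ k₂ k₃ β₁ β₂ u v * Qk k₁ k₂ k₃ β₁ β₂ u v) := by
    rw [show 2 * (δ / (β₁ + β₂)) - 2
        = ((δ / (β₁ + β₂) - 1 - 1) + (δ / (β₁ + β₂) - 1 - 1)) + (1 + 1) by ring,
      Real.rpow_add hQ, Real.rpow_add hQ, Real.rpow_add hQ, Real.rpow_one]
  unfold hessDet
  rw [pduu_PKad k₁ k₂ k₃ β₁ β₂ δ hQpos hu hv, pdvv_PKad k₁ k₂ k₃ β₁ β₂ δ hQpos hu hv,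
    pduv_PKad k₁ k₂ k₃ β₁ β₂ δ hQpos hu hv, hq1, hq2]
  unfold Qu Qv Quu Qvv Quv Stilde
  rw [Real.rpow_sub_one hu.ne' (β₁ + β₂ - 1), Real.rpow_sub_one hu.ne' (β₁ - 1),
    Real.rpow_sub_one hu.ne' (β₁ + β₂), Real.rpow_sub_one hu.ne' β₁,
    Real.rpow_sub_one hv.ne' (β₁ + β₂ - 1), Real.rpow_sub_one hv.ne' (β₂ - 1),
    Real.rpow_sub_one hv.ne' (β₁ + β₂), Real.rpow_sub_one hv.ne' β₂]
  unfold Qk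
  field_simp
  ring

/-- One differentiation step for a 4-term power sum on (0,∞). -/
lemma power_step (c₁ c₂ c₃ c₄ p₁ p₂ p₃ p₄ : ℝ)
    (h : ∀ t : ℝ, 0 < t → c₁ * t ^ p₁ + c₂ * t ^ p₂ + c₃ * t ^ p₃ + c₄ * t ^ p₄ = 0) :
    ∀ t : ℝ, 0 < t →
      (c₁ * p₁) * t ^ p₁ + (c₂ * p₂) * t ^ p₂ + (c₃ * p₃) * t ^ p₃ + (c₄ * p₄) * t ^ p₄ = 0 := by
  intro t ht
  have hd : HasDerivAt (fun x : ℝ => c₁ * x ^ p₁ + c₂ * x ^ p₂ + c₃ * x ^ p₃ + c₄ * x ^ p₄)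
      (c₁ * (p₁ * t ^ (p₁ - 1)) + c₂ * (p₂ * t ^ (p₂ - 1)) + c₃ * (p₃ * t ^ (p₃ - 1))
        + c₄ * (p₄ * t ^ (p₄ - 1))) t := by
    exact (((Real.hasDerivAt_rpow_const (Or.inl ht.ne')).const_mul c₁).add
      ((Real.hasDerivAt_rpow_const (Or.inl ht.ne')).const_mul c₂)).add
      ((Real.hasDerivAt_rpow_const (Or.inl ht.ne')).const_mul c₃) |>.add
      ((Real.hasDerivAt_rpow_const (Or.inl ht.ne')).const_mul c₄)
  have hev : (fun x : ℝ => c₁ * x ^ p₁ + c₂ * x ^ p₂ + c₃ * x ^ p₃ + c₄ * x ^ p₄)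
      =ᶠ[nhds t] (fun _ => (0:ℝ)) := by
    filter_upwards [Ioi_mem_nhds ht] with x hx using h x hx
  have h0 : deriv (fun x : ℝ => c₁ * x ^ p₁ + c₂ * x ^ p₂ + c₃ * x ^ p₃ + c₄ * x ^ p₄) t = 0 := by
    rw [hev.deriv_eq]; simp
  have := hd.deriv
  rw [h0] at this
  have ht' : t ≠ 0 := ht.ne'
  have e1 : t ^ (p₁ - 1) = t ^ p₁ / t := Real.rpow_sub_one ht' p₁
  have e2 : t ^ (p₂ - 1) = t ^ p₂ / t := Real.rpow_sub_one ht' p₂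
  have e3 : t ^ (p₃ - 1) = t ^ p₃ / t := Real.rpow_sub_one ht' p₃
  have e4 : t ^ (p₄ - 1) = t ^ p₄ / t := Real.rpow_sub_one ht' p₄
  rw [e1, e2, e3, e4] at this
  field_simp at this
  linarith [this]

/-- Linear independence of four distinct powers on (0,∞). -/
lemma four_powers (c₁ c₂ c₃ c₄ p₁ p₂ p₃ p₄ : ℝ)
    (h12 : p₁ ≠ p₂) (h13 : p₁ ≠ p₃) (h14 : p₁ ≠ p₄) (h23 : p₂ ≠ p₃) (h24 : p₂ ≠ p₄)
    (h34 : p₃ ≠ p₄)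
    (h : ∀ t : ℝ, 0 < t → c₁ * t ^ p₁ + c₂ * t ^ p₂ + c₃ * t ^ p₃ + c₄ * t ^ p₄ = 0) :
    c₁ = 0 ∧ c₂ = 0 ∧ c₃ = 0 ∧ c₄ = 0 := by
  have h1 := power_step _ _ _ _ _ _ _ _ h
  have h2 := power_step _ _ _ _ _ _ _ _ h1
  have h3 := power_step _ _ _ _ _ _ _ _ h2
  have e0 := h 1 one_pos
  have e1 := h1 1 one_pos
  have e2 := h2 1 one_pos
  have e3 := h3 1 one_pos
  simp only [Real.one_rpow, mul_one] at e0 e1 e2 e3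
  have d12 : p₁ - p₂ ≠ 0 := sub_ne_zero.mpr h12
  have d13 : p₁ - p₃ ≠ 0 := sub_ne_zero.mpr h13
  have d14 : p₁ - p₄ ≠ 0 := sub_ne_zero.mpr h14
  have d23 : p₂ - p₃ ≠ 0 := sub_ne_zero.mpr h23
  have d24 : p₂ - p₄ ≠ 0 := sub_ne_zero.mpr h24
  have d34 : p₃ - p₄ ≠ 0 := sub_ne_zero.mpr h34
  have hc1 : c₁ * ((p₁ - p₂) * ((p₁ - p₃) * (p₁ - p₄))) = 0 := by
    linear_combination e3 - (p₂ + p₃ + p₄) * e2 + (p₂*p₃ + p₂*p₄ + p₃*p₄) * e1 - p₂*p₃*p₄ * e0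
  have hc2 : c₂ * ((p₂ - p₁) * ((p₂ - p₃) * (p₂ - p₄))) = 0 := by
    linear_combination e3 - (p₁ + p₃ + p₄) * e2 + (p₁*p₃ + p₁*p₄ + p₃*p₄) * e1 - p₁*p₃*p₄ * e0
  have hc3 : c₃ * ((p₃ - p₁) * ((p₃ - p₂) * (p₃ - p₄))) = 0 := by
    linear_combination e3 - (p₁ + p₂ + p₄) * e2 + (p₁*p₂ + p₁*p₄ + p₂*p₄) * e1 - p₁*p₂*p₄ * e0
  have hc4 : c₄ * ((p₄ - p₁) * ((p₄ - p₂) * (p₄ - p₃))) = 0 := by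
    linear_combination e3 - (p₁ + p₂ + p₃) * e2 + (p₁*p₂ + p₁*p₃ + p₂*p₃) * e1 - p₁*p₂*p₃ * e0
  refine ⟨?_, ?_, ?_, ?_⟩
  · exact (mul_eq_zero.mp hc1).resolve_right (by
      exact mul_ne_zero d12 (mul_ne_zero d13 d14))
  · exact (mul_eq_zero.mp hc2).resolve_right (by
      exact mul_ne_zero (sub_ne_zero.mpr h12.symm) (mul_ne_zero d23 d24))
  · exact (mul_eq_zero.mp hc3).resolve_right (by
      exact mul_ne_zero (sub_ne_zero.mpr h13.symm) (mul_ne_zero (sub_ne_zero.mpr h23.symm) d34))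
  · exact (mul_eq_zero.mp hc4).resolve_right (by
      exact mul_ne_zero (sub_ne_zero.mpr h14.symm) (mul_ne_zero (sub_ne_zero.mpr h24.symm)
        (sub_ne_zero.mpr h34.symm)))

set_option maxHeartbeats 1000000 in
theorem kadiyala_hessDet_vanishes_iff
    (k₁ k₂ k₃ β₁ β₂ δ : ℝ)
    (hsum : k₁ + 2 * k₂ + k₃ = 1) (hk₁ : 0 ≤ k₁) (hk₂ : 0 ≤ k₂) (hk₃ : 0 ≤ k₃)
    (h12 : ¬(k₁ = 0 ∧ k₂ = 0)) (h23 : ¬(k₂ = 0 ∧ k₃ = 0))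
    (hβ₁ : 0 < β₁ * (β₁ + β₂)) (hβ₂ : 0 < β₂ * (β₁ + β₂)) (hδ : 0 < δ) :
    (∀ u v : ℝ, 0 < u → 0 < v → hessDet (PKad k₁ k₂ k₃ β₁ β₂ δ) u v = 0) ↔
      (δ = 1 ∨ (k₂ = 0 ∧ β₁ + β₂ = 1) ∨ (β₁ = 1 ∧ β₂ = 1 ∧ k₂ ^ 2 - k₁ * k₃ = 0)) := by
  -- basic parameter facts
  have ha : β₁ + β₂ ≠ 0 := by
    intro h; rw [h, mul_zero] at hβ₁; exact lt_irrefl 0 hβ₁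
  have hb1 : β₁ ≠ 0 := by
    intro h; rw [h, zero_mul] at hβ₁; exact lt_irrefl 0 hβ₁
  have hb2 : β₂ ≠ 0 := by
    intro h; rw [h, zero_mul] at hβ₂; exact lt_irrefl 0 hβ₂
  have ha2 : 0 < (β₁ + β₂) ^ 2 := by positivity
  have hbb : 0 < β₁ * β₂ := by nlinarith [mul_pos hβ₁ hβ₂]
  -- positivity of Q
  have hQpos : ∀ x y : ℝ, 0 < x → 0 < y → 0 < Qk k₁ k₂ k₃ β₁ β₂ x y := by
    intro x y hx hy
    unfold Qk
    have hA := Real.rpow_pos_of_pos hx (β₁ + β₂)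
    have hB1 := Real.rpow_pos_of_pos hx β₁
    have hB2 := Real.rpow_pos_of_pos hy β₂
    have hC := Real.rpow_pos_of_pos hy (β₁ + β₂)
    rcases eq_or_lt_of_le hk₂ with h2 | h2
    · have hk1 : 0 < k₁ := by
        rcases eq_or_lt_of_le hk₁ with h1 | h1
        · exact absurd ⟨h1.symm, h2.symm⟩ h12
        · exact h1
      have hk3 : 0 < k₃ := by
        rcases eq_or_lt_of_le hk₃ with h3 | h3
        · exact absurd ⟨h2.symm, h3.symm⟩ h23
        · exact h3
      nlinarith [mul_pos hk1 hA, mul_pos hk3 hC, mul_pos hB1 hB2]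
    · nlinarith [mul_nonneg hk₁ hA.le, mul_nonneg hk₃ hC.le,
        mul_pos (mul_pos h2 hB1) hB2]
  have hs : δ / (β₁ + β₂) ≠ 0 := div_ne_zero hδ.ne' ha
  constructor
  · -- forward direction
    intro h
    by_cases hδ1 : δ = 1
    · exact Or.inl hδ1
    -- Stilde vanishes identically
    have hSt : ∀ u v : ℝ, 0 < u → 0 < v → Stilde k₁ k₂ k₃ β₁ β₂ u v = 0 := by
      intro u v hu hv
      have hf := hess_formula k₁ k₂ k₃ β₁ β₂ δ ha hQpos hu hv
      rw [h u v hu hv, zero_mul] at hf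
      have hc : (δ / (β₁ + β₂)) ^ 2 * (δ - 1)
          * (Qk k₁ k₂ k₃ β₁ β₂ u v) ^ (2 * (δ / (β₁ + β₂)) - 2) ≠ 0 :=
        mul_ne_zero (mul_ne_zero (pow_ne_zero 2 hs) (sub_ne_zero.mpr hδ1))
          (Real.rpow_pos_of_pos (hQpos u v hu hv) _).ne'
      exact ((mul_eq_zero.mp hf.symm).resolve_left hc)
    -- specialize to v = 1 and decompose into powers
    have hpow : ∀ t : ℝ, 0 < t →
        ((β₁ + β₂ - 1) * k₁ * k₃ * (β₁ + β₂) ^ 2) * t ^ (β₁ + β₂)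
          + (-(4 * k₂ ^ 2 * β₁ * β₂)) * t ^ (β₁ + β₁)
          + (2 * k₁ * k₂ * (β₁ + β₂) * β₂ * (β₂ - 1)) * t ^ (β₁ + β₂ + β₁)
          + (2 * k₂ * k₃ * (β₁ + β₂) * β₁ * (β₁ - 1)) * t ^ β₁ = 0 := by
      intro t ht
      have hS := hSt t 1 ht one_pos
      unfold Stilde at hS
      rw [Real.one_rpow, Real.one_rpow] at hS
      have e1 : t ^ (β₁ + β₁) = t ^ β₁ * t ^ β₁ := Real.rpow_add ht β₁ β₁
      have e2 : t ^ (β₁ + β₂ + β₁) = t ^ (β₁ + β₂) * t ^ β₁ := Real.rpow_add ht _ β₁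
      rw [e1, e2]
      nlinarith [hS]
    by_cases hbe : β₁ = β₂
    · -- equal exponents case
      subst hbe
      have hpow' : ∀ t : ℝ, 0 < t →
          ((β₁ + β₁ - 1) * k₁ * k₃ * (β₁ + β₁) ^ 2 + (-(4 * k₂ ^ 2 * β₁ * β₁))) * t ^ (β₁ + β₁)
            + (2 * k₁ * k₂ * (β₁ + β₁) * β₁ * (β₁ - 1)) * t ^ (β₁ + β₁ + β₁)
            + (2 * k₂ * k₃ * (β₁ + β₁) * β₁ * (β₁ - 1)) * t ^ β₁
            + 0 * t ^ (0:ℝ) = 0 := by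
        intro t ht
        have := hpow t ht
        linarith [this]
      obtain ⟨hc1, hc2, hc3, -⟩ := four_powers _ _ _ _ _ _ _ _
        (by intro hcon; apply hb1; linarith)
        (by intro hcon; apply hb1; linarith)
        (by intro hcon; apply hb1; linarith)
        (by intro hcon; apply hb1; linarith)
        (by intro hcon; apply hb1; linarith)
        (by intro hcon; apply hb1; linarith) hpow'
      -- hc1 : (2β₁-1)k₁k₃(2β₁)² = 4k₂²β₁² ; hc2 : k₁k₂(β₁-1) = 0 ; hc3 : k₂k₃(β₁-1) = 0
      have hmul_ne : (2 * (β₁ + β₁) * β₁) ≠ 0 :=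
        mul_ne_zero (mul_ne_zero two_ne_zero ha) hb1
      have key1 : (β₁ + β₁ - 1) * (k₁ * k₃) = k₂ ^ 2 := by
        have h' : ((β₁ + β₁ - 1) * (k₁ * k₃) - k₂ ^ 2) * (4 * β₁ ^ 2) = 0 := by
          linear_combination hc1
        have h4 : (4 : ℝ) * β₁ ^ 2 ≠ 0 := by positivity
        have := (mul_eq_zero.mp h').resolve_right h4
        linarith
      have key2 : k₁ * k₂ * (β₁ - 1) = 0 := by
        have h' : (k₁ * k₂ * (β₁ - 1)) * (2 * (β₁ + β₁) * β₁) = 0 := by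
          linear_combination hc2
        exact (mul_eq_zero.mp h').resolve_right hmul_ne
      have key3 : k₂ * k₃ * (β₁ - 1) = 0 := by
        have h' : (k₂ * k₃ * (β₁ - 1)) * (2 * (β₁ + β₁) * β₁) = 0 := by
          linear_combination hc3
        exact (mul_eq_zero.mp h').resolve_right hmul_ne
      rcases eq_or_lt_of_le hk₂ with h2 | h2
      · -- k₂ = 0
        have hk1 : k₁ ≠ 0 := fun h1 => h12 ⟨h1, h2.symm⟩
        have hk3 : k₃ ≠ 0 := fun h3 => h23 ⟨h2.symm, h3⟩
        have : β₁ + β₁ - 1 = 0 := by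
          have := key1
          rw [← h2] at this
          have hkk : k₁ * k₃ ≠ 0 := mul_ne_zero hk1 hk3
          have : (β₁ + β₁ - 1) * (k₁ * k₃) = 0 := by rw [this]; ring
          exact (mul_eq_zero.mp this).resolve_right hkk
        exact Or.inr (Or.inl ⟨h2.symm, by linarith⟩)
      · -- k₂ > 0
        have hk2ne : k₂ ≠ 0 := h2.ne'
        by_cases hbeta : β₁ = 1
        · refine Or.inr (Or.inr ⟨hbeta, hbeta, ?_⟩)
          rw [hbeta] at key1
          linear_combination -key1
        · exfalso
          have hb1ne : β₁ - 1 ≠ 0 := sub_ne_zero.mpr hbeta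
          have hk10 : k₁ = 0 := by
            rcases mul_eq_zero.mp key2 with hx | hx
            · exact (mul_eq_zero.mp hx).resolve_right hk2ne
            · exact absurd hx hb1ne
          have hk30 : k₃ = 0 := by
            rcases mul_eq_zero.mp key3 with hx | hx
            · rcases mul_eq_zero.mp hx with hy | hy
              · exact absurd hy hk2ne
              · exact hy
            · exact absurd hx hb1ne
          rw [hk10, hk30] at key1
          have : k₂ ^ 2 = 0 := by linear_combination -key1
          exact pow_ne_zero 2 hk2ne this
    · -- distinct exponents case
      have hpow' : ∀ t : ℝ, 0 < t →
          ((β₁ + β₂ - 1) * k₁ * k₃ * (β₁ + β₂) ^ 2) * t ^ (β₁ + β₂)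
            + (-(4 * k₂ ^ 2 * β₁ * β₂)) * t ^ (β₁ + β₁)
            + (2 * k₁ * k₂ * (β₁ + β₂) * β₂ * (β₂ - 1)) * t ^ (β₁ + β₂ + β₁)
            + (2 * k₂ * k₃ * (β₁ + β₂) * β₁ * (β₁ - 1)) * t ^ β₁ = 0 := hpow
      obtain ⟨hc1, hc2, hc3, hc4⟩ := four_powers _ _ _ _ _ _ _ _
        (by intro hcon; apply hbe; linarith)
        (by intro hcon; apply hb1; linarith)
        (by intro hcon; apply hb2; linarith)
        (by intro hcon; apply hb2; linarith)
        (by intro hcon; apply hb1; linarith)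
        (by intro hcon; apply ha; linarith) hpow'
      -- from hc2 : k₂ = 0
      have hk20 : k₂ = 0 := by
        have h' : k₂ ^ 2 * (4 * (β₁ * β₂)) = 0 := by linear_combination -hc2
        have hk2sq : k₂ ^ 2 = 0 := (mul_eq_zero.mp h').resolve_right
          (mul_ne_zero four_ne_zero hbb.ne')
        exact pow_eq_zero_iff (by norm_num : (2:ℕ) ≠ 0) |>.mp hk2sq
      have hk1 : k₁ ≠ 0 := fun h1 => h12 ⟨h1, hk20⟩
      have hk3 : k₃ ≠ 0 := fun h3 => h23 ⟨hk20, h3⟩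
      have hsum1 : β₁ + β₂ = 1 := by
        have hkk : k₁ * k₃ * (β₁ + β₂) ^ 2 ≠ 0 :=
          mul_ne_zero (mul_ne_zero hk1 hk3) ha2.ne'
        have : (β₁ + β₂ - 1) * (k₁ * k₃ * (β₁ + β₂) ^ 2) = 0 := by linear_combination hc1
        have := (mul_eq_zero.mp this).resolve_right hkk
        linarith
      exact Or.inr (Or.inl ⟨hk20, hsum1⟩)
  · -- backward direction
    intro hcase u v hu hv
    have hf := hess_formula k₁ k₂ k₃ β₁ β₂ δ ha hQpos hu hv
    have huv : (u ^ 2 * v ^ 2 : ℝ) ≠ 0 := by positivity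
    rcases hcase with hδ1 | ⟨hk20, hsum1⟩ | ⟨hbe1, hbe2, hkk⟩
    · have hf2 : hessDet (PKad k₁ k₂ k₃ β₁ β₂ δ) u v * (u ^ 2 * v ^ 2) = 0 := by
        rw [hf, hδ1]; ring
      exact (mul_eq_zero.mp hf2).resolve_right huv
    · have hSt : Stilde k₁ k₂ k₃ β₁ β₂ u v = 0 := by
        unfold Stilde
        rw [hk20, hsum1]
        ring
      rw [hSt, mul_zero] at hf
      exact (mul_eq_zero.mp hf).resolve_right huv
    · have hSt : Stilde k₁ k₂ k₃ β₁ β₂ u v = 0 := by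
        unfold Stilde
        subst hbe1; subst hbe2
        have eu : u ^ ((1:ℝ) + 1) = u * u := by
          rw [Real.rpow_add hu, Real.rpow_one]
        have ev : v ^ ((1:ℝ) + 1) = v * v := by
          rw [Real.rpow_add hv, Real.rpow_one]
        rw [eu, ev, Real.rpow_one, Real.rpow_one]
        linear_combination (-(4 * (u * v) ^ 2)) * hkk
      rw [hSt, mul_zero] at hf
      exact (mul_eq_zero.mp hf).resolve_right huv
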